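/- Let h > 0 satisfy Ah ≤ a. Then for every u ∈ ℝ, ∫_0^T |L_h(t−u)| dt ≤ ‖K'‖₁ (T + 4a) / (2a). -/

import Mathlib

open MeasureTheory Real

/-- For `h > 0` with `Ah ≤ a` and every `u ∈ ℝ`,
`∫_0^T |L_h(t−u)| dt ≤ ‖K'‖₁ (T + 4a) / (2a)`. -/
theorem stmt_9 (a A T : ℝ) (ha : 0 < a) (hA : 0 < A) (hT : 0 < T)
    (K : ℝ → ℝ) (hK : ContDiff ℝ 1 K)
    (hKsupp : Function.support K ⊆ Set.Icc (-A) A)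
    (h : ℝ) (hh : 0 < h) (hha : A * h ≤ a)
    (s : ℤ → ℝ) (hs : ∀ k, s k = if 0 ≤ k then 1 else -1)
    (L : ℝ → ℝ)
    (hL : ∀ x, L x = h⁻¹ * ∑' k : ℤ, s k * deriv K ((x - (2 * (k : ℝ) + 1) * a) / h)) :
    ∀ u : ℝ, (∫ t in (0 : ℝ)..T, |L (t - u)|)
      ≤ (∫ x, |deriv K x|) * (T + 4 * a) / (2 * a) := by
  intro u
  have h2a : (0:ℝ) < 2 * a := by linarith
  set I := ∫ x, |deriv K x| with hI
  have hI0 : 0 ≤ I := integral_nonneg fun x => abs_nonneg _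
  have hKd : Continuous (deriv K) := hK.continuous_deriv le_rfl
  -- deriv K vanishes outside [-A, A]
  have hder0 : ∀ y : ℝ, y ∉ Set.Icc (-A) A → deriv K y = 0 := by
    intro y hy
    have hmem : (Set.Icc (-A) A)ᶜ ∈ nhds y := isClosed_Icc.isOpen_compl.mem_nhds hy
    have hEq : K =ᶠ[nhds y] fun _ => 0 := by
      filter_upwards [hmem] with z hz
      by_contra hne
      exact hz (hKsupp hne)
    rw [hEq.deriv_eq, deriv_const]
  set m₀ : ℤ := ⌈(-u) / (2 * a)⌉ - 1 with hm₀
  set m₁ : ℤ := ⌊(T - u) / (2 * a)⌋ with hm₁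
  set F : Finset ℤ := Finset.Icc m₀ m₁ with hF
  -- vanishing of off-window terms
  have key : ∀ t : ℝ, t ∈ Set.uIcc (0:ℝ) T → ∀ k : ℤ, k ∉ F →
      deriv K ((t - u - (2 * (k:ℝ) + 1) * a) / h) = 0 := by
    intro t ht k hk
    rw [Set.uIcc_of_le hT.le] at ht
    obtain ⟨ht0, htT⟩ := ht
    rw [hF, Finset.mem_Icc, not_and_or, not_le, not_le] at hk
    apply hder0
    rcases hk with hk | hk
    · -- k < m₀ : (2k+2)a < -u ≤ t - u
      have h1 : ((k:ℝ)) + 1 < (-u) / (2 * a) := by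
        have hk2 : (k : ℤ) ≤ ⌈(-u) / (2 * a)⌉ - 2 := by omega
        have hk3 : ((k:ℝ)) ≤ (⌈(-u) / (2 * a)⌉ : ℝ) - 2 := by exact_mod_cast hk2
        have := Int.ceil_lt_add_one ((-u) / (2 * a))
        linarith
      have h2 : ((k:ℝ) + 1) * (2 * a) < -u := (lt_div_iff₀ h2a).mp h1
      have h3 : A < (t - u - (2 * (k:ℝ) + 1) * a) / h := by
        rw [lt_div_iff₀ hh]
        nlinarith
      intro hmem
      exact absurd hmem.2 (not_le.mpr h3)
    · -- k > m₁ : 2ka > T - u ≥ t - u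
      have h1 : (T - u) / (2 * a) < (k:ℝ) := by
        have hk2 : (⌊(T - u) / (2 * a)⌋ : ℤ) + 1 ≤ k := by omega
        have hk3 : (⌊(T - u) / (2 * a)⌋ : ℝ) + 1 ≤ (k:ℝ) := by exact_mod_cast hk2
        have := Int.lt_floor_add_one ((T - u) / (2 * a))
        linarith
      have h2 : T - u < (k:ℝ) * (2 * a) := (div_lt_iff₀ h2a).mp h1
      have h3 : (t - u - (2 * (k:ℝ) + 1) * a) / h < -A := by
        rw [div_lt_iff₀ hh]
        nlinarith
      intro hmem
      exact absurd hmem.1 (not_le.mpr h3)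
  -- on [0,T], |L(t-u)| is a finite sum
  have hEqOn : Set.EqOn (fun t => |L (t - u)|)
      (fun t => |∑ k ∈ F, h⁻¹ * (s k * deriv K ((t - u - (2 * (k:ℝ) + 1) * a) / h))|)
      (Set.uIcc (0:ℝ) T) := by
    intro t ht
    simp only
    rw [hL, tsum_eq_sum (s := F) (fun k hk => by rw [key t ht k hk, mul_zero]),
      Finset.mul_sum]
  have contk : ∀ k : ℤ, Continuous fun t : ℝ =>
      deriv K ((t - u - (2 * (k:ℝ) + 1) * a) / h) := fun k =>
    hKd.comp (by fun_prop)
  have cont1 : Continuous fun t : ℝ =>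
      |∑ k ∈ F, h⁻¹ * (s k * deriv K ((t - u - (2 * (k:ℝ) + 1) * a) / h))| := by
    apply Continuous.abs
    exact continuous_finset_sum _ fun k _ =>
      continuous_const.mul (continuous_const.mul (contk k))
  have cont2 : Continuous fun t : ℝ =>
      ∑ k ∈ F, h⁻¹ * |deriv K ((t - u - (2 * (k:ℝ) + 1) * a) / h)| :=
    continuous_finset_sum _ fun k _ => continuous_const.mul (contk k).abs
  rw [intervalIntegral.integral_congr hEqOn]
  have habs : ∀ k : ℤ, |s k| = 1 := by
    intro k
    rw [hs k]
    split <;> simp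
  have step1 : (∫ t in (0:ℝ)..T,
        |∑ k ∈ F, h⁻¹ * (s k * deriv K ((t - u - (2 * (k:ℝ) + 1) * a) / h))|)
      ≤ ∫ t in (0:ℝ)..T, ∑ k ∈ F, h⁻¹ * |deriv K ((t - u - (2 * (k:ℝ) + 1) * a) / h)| := by
    apply intervalIntegral.integral_mono_on hT.le (cont1.intervalIntegrable _ _)
      (cont2.intervalIntegrable _ _)
    intro t _
    refine (Finset.abs_sum_le_sum_abs _ _).trans (le_of_eq ?_)
    apply Finset.sum_congr rfl
    intro k _
    rw [abs_mul, abs_mul, habs k, one_mul, abs_of_pos (inv_pos.mpr hh)]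
  refine step1.trans ?_
  rw [intervalIntegral.integral_finset_sum
    (fun (k : ℤ) _ => ((show Continuous fun t : ℝ => h⁻¹ * |deriv K ((t - u - (2 * (k:ℝ) + 1) * a) / h)| from
      continuous_const.mul (contk k).abs).intervalIntegrable _ _))]
  -- per-term bound
  have hterm : ∀ k : ℤ, (∫ t in (0:ℝ)..T,
      h⁻¹ * |deriv K ((t - u - (2 * (k:ℝ) + 1) * a) / h)|) ≤ I := by
    intro k
    set b : ℝ := u + (2 * (k:ℝ) + 1) * a with hb
    have hrw : ∀ t : ℝ, t - u - (2 * (k:ℝ) + 1) * a = t - b := by intro t; rw [hb]; ring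
    have hint : Integrable (fun t : ℝ => |deriv K ((t - b) / h)|) := by
      apply Continuous.integrable_of_hasCompactSupport
        ((hKd.comp (by fun_prop)).abs)
      apply HasCompactSupport.intro (isCompact_Icc (a := b - A * h) (b := b + A * h))
      intro t ht
      simp only [Function.comp_apply, Function.comp]
      rw [hder0, abs_zero]
      intro hmem
      apply ht
      obtain ⟨hm1, hm2⟩ := hmem
      constructor
      · nlinarith [(le_div_iff₀ hh).mp hm1]
      · nlinarith [(div_le_iff₀ hh).mp hm2]
    have hfull : (∫ t : ℝ, |deriv K ((t - b) / h)|) = h * I := by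
      rw [integral_sub_right_eq_self (fun y : ℝ => |deriv K (y / h)|) b]
      rw [MeasureTheory.Measure.integral_comp_div (fun y : ℝ => |deriv K y|) h,
        abs_of_pos hh, smul_eq_mul, hI]
    rw [intervalIntegral.integral_const_mul]
    simp_rw [hrw]
    have hle : (∫ t in (0:ℝ)..T, |deriv K ((t - b) / h)|) ≤ h * I := by
      rw [intervalIntegral.integral_of_le hT.le, ← hfull]
      exact setIntegral_le_integral hint (Filter.Eventually.of_forall fun t => abs_nonneg _)
    calc h⁻¹ * ∫ t in (0:ℝ)..T, |deriv K ((t - b) / h)|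
        ≤ h⁻¹ * (h * I) := by
          exact mul_le_mul_of_nonneg_left hle (inv_nonneg.mpr hh.le)
      _ = I := by field_simp
  -- cardinality bound
  have hcard : (F.card : ℝ) ≤ T / (2 * a) + 2 := by
    rw [hF, Int.card_Icc]
    rcases le_or_gt m₀ m₁ with hle | hlt
    · have h0 : (0:ℤ) ≤ m₁ + 1 - m₀ := by omega
      have hcast : ((m₁ + 1 - m₀).toNat : ℝ) = (m₁ : ℝ) + 1 - (m₀ : ℝ) := by
        rw [← Int.cast_natCast (R := ℝ), Int.toNat_of_nonneg h0]
        push_cast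
        ring
      rw [hcast]
      have h1 : (m₁ : ℝ) ≤ (T - u) / (2 * a) := Int.floor_le _
      have h2 : (-u) / (2 * a) ≤ (⌈(-u) / (2 * a)⌉ : ℝ) := Int.le_ceil _
      have h3 : (m₀ : ℝ) = (⌈(-u) / (2 * a)⌉ : ℝ) - 1 := by
        rw [hm₀]; push_cast; ring
      have h4 : (T - u) / (2 * a) - (-u) / (2 * a) = T / (2 * a) := by
        rw [div_sub_div_same]; ring_nf
      linarith
    · have hz : (m₁ + 1 - m₀).toNat = 0 := by omega
      rw [hz]
      have hp : (0:ℝ) ≤ T / (2 * a) := by positivity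
      norm_num
      linarith
  calc (∑ k ∈ F, ∫ t in (0:ℝ)..T, h⁻¹ * |deriv K ((t - u - (2 * (k:ℝ) + 1) * a) / h)|)
      ≤ ∑ _k ∈ F, I := Finset.sum_le_sum fun k _ => hterm k
    _ = (F.card : ℝ) * I := by rw [Finset.sum_const, nsmul_eq_mul]
    _ ≤ (T / (2 * a) + 2) * I := mul_le_mul_of_nonneg_right hcard hI0
    _ = I * (T + 4 * a) / (2 * a) := by field_simp; ring
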